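/- If f : [a,b] → ℝ is convex with a < b, then f((a+b)/2) ≤ (1/(b-a)) ∫_a^b f(x) dx ≤ (f(a)+f(b))/2. -/

import Mathlib

open MeasureTheory intervalIntegral

theorem hermite_hadamard (a b : ℝ) (hab : a < b) (f : ℝ → ℝ)
    (hconv : ConvexOn ℝ (Set.Icc a b) f)
    (hint : IntervalIntegrable f volume a b) :
    f ((a + b) / 2) ≤ (1 / (b - a)) * ∫ x in a..b, f x ∧
      (1 / (b - a)) * ∫ x in a..b, f x ≤ (f a + f b) / 2 := by
  have hba : (0:ℝ) < b - a := by linarith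
  -- integrability of the reflected function
  have hint' : IntervalIntegrable (fun x => f (a + b - x)) volume a b := by
    have := hint.comp_sub_left (a + b)
    simpa using this.symm
  -- reflected integral equals original
  have hrefl : (∫ x in a..b, f (a + b - x)) = ∫ x in a..b, f x := by
    have := intervalIntegral.integral_comp_sub_left (a := a) (b := b) f (a + b)
    simpa using this
  constructor
  · -- left inequality
    have hpt : ∀ x ∈ Set.Icc a b, f ((a + b) / 2) ≤ (f x + f (a + b - x)) / 2 := by
      intro x hx
      have hx' : a + b - x ∈ Set.Icc a b := by
        constructor <;> [linarith [hx.2]; linarith [hx.1]]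
      have := hconv.2 hx hx' (by norm_num : (0:ℝ) ≤ 1/2) (by norm_num : (0:ℝ) ≤ 1/2)
        (by norm_num)
      have heq : (1/2 : ℝ) • x + (1/2 : ℝ) • (a + b - x) = (a + b) / 2 := by
        simp [smul_eq_mul]; ring
      rw [heq] at this
      rw [smul_eq_mul, smul_eq_mul] at this
      linarith
    have hmono : (∫ _ in a..b, f ((a + b) / 2)) ≤
        ∫ x in a..b, (f x + f (a + b - x)) / 2 :=
      intervalIntegral.integral_mono_on hab.le intervalIntegrable_const
        (((hint.add hint').div_const 2)) hpt
    have hL : (∫ _ in a..b, f ((a + b) / 2)) = (b - a) * f ((a + b) / 2) := by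
      simp [smul_eq_mul]
    have hR : (∫ x in a..b, (f x + f (a + b - x)) / 2) = ∫ x in a..b, f x := by
      rw [intervalIntegral.integral_div, intervalIntegral.integral_add hint hint', hrefl]
      ring
    rw [hL, hR] at hmono
    calc f ((a + b) / 2) ≤ (∫ x in a..b, f x) / (b - a) := by
          rw [le_div_iff₀ hba]; linarith
      _ = (1 / (b - a)) * ∫ x in a..b, f x := by ring
  · -- right inequality
    have hpt : ∀ x ∈ Set.Icc a b, f x ≤ ((b - x) * f a + (x - a) * f b) / (b - a) := by
      intro x hx
      have h1 : (0:ℝ) ≤ (b - x) / (b - a) := div_nonneg (by linarith [hx.2]) hba.le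
      have h2 : (0:ℝ) ≤ (x - a) / (b - a) := div_nonneg (by linarith [hx.1]) hba.le
      have h3 : (b - x) / (b - a) + (x - a) / (b - a) = 1 := by field_simp; ring
      have := hconv.2 (Set.left_mem_Icc.2 hab.le) (Set.right_mem_Icc.2 hab.le) h1 h2 h3
      have heq : ((b - x) / (b - a)) • a + ((x - a) / (b - a)) • b = x := by
        simp only [smul_eq_mul]; field_simp; ring
      rw [heq] at this
      refine this.trans_eq ?_
      simp only [smul_eq_mul]; field_simp
    have hlin : IntervalIntegrable (fun x => ((b - x) * f a + (x - a) * f b) / (b - a))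
        volume a b := by
      apply Continuous.intervalIntegrable; continuity
    have hmono := intervalIntegral.integral_mono_on hab.le hint hlin hpt
    have hval : (∫ x in a..b, ((b - x) * f a + (x - a) * f b) / (b - a))
        = (b - a) * ((f a + f b) / 2) := by
      have hfe : (fun x => ((b - x) * f a + (x - a) * f b) / (b - a))
          = fun x => (b * f a - a * f b) / (b - a) + ((f b - f a) / (b - a)) * x := by
        funext x; field_simp; ring
      rw [hfe, intervalIntegral.integral_add intervalIntegrable_const
        (by apply Continuous.intervalIntegrable; continuity),
        intervalIntegral.integral_const, intervalIntegral.integral_const_mul, integral_id]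
      simp only [smul_eq_mul]; field_simp
      ring
    rw [hval] at hmono
    rw [one_div, inv_mul_le_iff₀ hba]
    linarith
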